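/- Every perfectly 2-divisible (i.e., perfectly divisible) graph G with clique number ω satisfies χ(G) ≤ ω(ω+1)/2. -/

import Mathlib

open SimpleGraph

universe u v

/-- A graph is perfect if every induced subgraph has chromatic number
equal to its clique number. -/
def IsPerfect {V : Type u} (G : SimpleGraph V) : Prop :=
  ∀ s : Set V, (G.induce s).chromaticNumber = ((G.induce s).cliqueNum : ℕ∞)

/-- A set of vertices is stable (independent) if no two of its vertices are adjacent. -/
def IsStableSet {V : Type u} (G : SimpleGraph V) (s : Set V) : Prop :=
  s.Pairwise fun x y => ¬ G.Adj x y

/-- `PerfectlyDiv k G`: `G` is perfectly `k`-divisible.  A graph is perfectly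
`1`-divisible iff it is perfect; for `k ≥ 2`, `G` is perfectly `k`-divisible iff for every
induced subgraph `H` of `G`, either `V(H)` is a stable set or it admits a partition
into `X₁, X₂` with `ω(H[X₁]) < ω(H)` and `H[X₂]` perfectly `(k-1)`-divisible.
(The value at `k = 0` is junk.) -/
def PerfectlyDiv : ℕ → {V : Type u} → SimpleGraph V → Prop
  | 0, _, _ => True
  | 1, _, G => IsPerfect G
  | (k+2), _V, G => ∀ s : Set _V,
      IsStableSet (G.induce s) Set.univ ∨
      ∃ X1 X2 : Set ↥s, X1 ∩ X2 = ∅ ∧ X1 ∪ X2 = Set.univ ∧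
        ((G.induce s).induce X1).cliqueNum < (G.induce s).cliqueNum ∧
        PerfectlyDiv (k+1) ((G.induce s).induce X2)

/-- `G` contains no induced subgraph isomorphic to `H`. -/
def IndFree {V : Type u} {W : Type v} (G : SimpleGraph V) (H : SimpleGraph W) : Prop :=
  ¬ ∃ s : Set V, Nonempty (H ≃g G.induce s)

/-- The stability (independence) number of a graph. -/
noncomputable def indepNum {V : Type u} (G : SimpleGraph V) : ℕ :=
  sSup {n | ∃ s : Finset V, IsStableSet G ↑s ∧ s.card = n}

private lemma cliqueNum_le_of_embedding' {V : Type*} {W : Type*} [Fintype V] [Fintype W]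
    {G : SimpleGraph V} {H : SimpleGraph W} (f : G ↪g H) : G.cliqueNum ≤ H.cliqueNum := by
  obtain ⟨s, hs⟩ := G.exists_isNClique_cliqueNum
  have hm : H.IsNClique G.cliqueNum (s.map f.toEmbedding) := by
    refine (hs.map (f := f.toEmbedding)).mono ?_
    intro x y hxy
    rw [SimpleGraph.map_adj] at hxy
    obtain ⟨a, b, hab, rfl, rfl⟩ := hxy
    exact f.map_adj_iff.mpr hab
  calc G.cliqueNum = (s.map f.toEmbedding).card := hm.2.symm
    _ ≤ H.cliqueNum := SimpleGraph.IsClique.card_le_cliqueNum (tc := hm.1)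

private noncomputable def induceInduceIso' {V : Type*} (G : SimpleGraph V) (s : Set V)
    (t : Set ↥s) : (G.induce s).induce t ≃g G.induce (Subtype.val '' t) where
  toEquiv := Equiv.Set.image Subtype.val t Subtype.val_injective
  map_rel_iff' := by
    intro a b
    simp [Equiv.Set.image, Equiv.Set.imageOfInjOn]

private def induceEmb' {V : Type*} (G : SimpleGraph V) (t : Set V) : G.induce t ↪g G :=
  ⟨Function.Embedding.subtype _, Iff.rfl⟩

private lemma stable_colorable' {V : Type*} {G : SimpleGraph V}
    (h : IsStableSet G Set.univ) : G.Colorable 1 := by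
  refine ⟨SimpleGraph.Coloring.mk (fun _ => 0) ?_⟩
  intro u v huv
  exact absurd huv (h (Set.mem_univ u) (Set.mem_univ v) huv.ne)

private lemma colorable_union' {V : Type*} (G : SimpleGraph V) {A B : Set V}
    (hU : A ∪ B = Set.univ) {a b : ℕ}
    (hA : (G.induce A).Colorable a) (hB : (G.induce B).Colorable b) :
    G.Colorable (a + b) := by
  classical
  obtain ⟨cA⟩ := hA
  obtain ⟨cB⟩ := hB
  have hmem : ∀ v : V, v ∉ A → v ∈ B := by
    intro v hv
    have hvu : v ∈ A ∪ B := hU ▸ Set.mem_univ v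
    rcases hvu with h | h
    · exact absurd h hv
    · exact h
  refine ⟨SimpleGraph.Coloring.mk
    (fun v => if h : v ∈ A then Fin.castAdd b (cA ⟨v, h⟩)
      else Fin.natAdd a (cB ⟨v, hmem v h⟩)) ?_⟩
  intro u v huv
  split_ifs with hu hv hv
  · intro hEq
    have hne : cA ⟨u, hu⟩ ≠ cA ⟨v, hv⟩ := cA.valid huv
    apply hne
    have := congrArg Fin.val hEq
    simp only [Fin.coe_castAdd] at this
    exact Fin.ext this
  · intro hEq
    have := congrArg Fin.val hEq
    simp only [Fin.coe_castAdd, Fin.coe_natAdd] at this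
    have h1 := (cA ⟨u, hu⟩).isLt
    omega
  · intro hEq
    have := congrArg Fin.val hEq
    simp only [Fin.coe_castAdd, Fin.coe_natAdd] at this
    have h1 := (cA ⟨v, hv⟩).isLt
    omega
  · intro hEq
    have hne : cB ⟨u, hmem u hu⟩ ≠ cB ⟨v, hmem v hv⟩ := cB.valid huv
    apply hne
    have := congrArg Fin.val hEq
    simp only [Fin.coe_natAdd] at this
    exact Fin.ext (by omega)

private lemma isPerfect_chromaticNumber_eq' {V : Type*} [Fintype V] {G : SimpleGraph V}
    (h : IsPerfect G) : G.chromaticNumber = (G.cliqueNum : ℕ∞) := by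
  have h1 := h Set.univ
  haveI : Fintype ↥(Set.univ : Set V) := Fintype.ofFinite _
  have e := G.induceUnivIso
  have hc : G.chromaticNumber = (G.induce Set.univ).chromaticNumber :=
    le_antisymm (chromaticNumber_mono_of_hom e.symm.toHom)
      (chromaticNumber_mono_of_hom e.toHom)
  have hk : (G.induce Set.univ).cliqueNum = G.cliqueNum :=
    le_antisymm (cliqueNum_le_of_embedding' e.toEmbedding)
      (cliqueNum_le_of_embedding' e.symm.toEmbedding)
  rw [hc, h1, hk]

private lemma main_key' {V : Type u} [Fintype V] (G : SimpleGraph V) (hG : PerfectlyDiv 2 G) :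
    ∀ n : ℕ, ∀ s : Set V, (G.induce s).cliqueNum ≤ n →
      (G.induce s).Colorable (n * (n + 1) / 2) := by
  intro n
  induction n with
  | zero =>
    intro s hs
    haveI : Fintype ↥s := Fintype.ofFinite _
    have : IsEmpty ↥s := by
      by_contra h
      rw [not_isEmpty_iff] at h
      obtain ⟨v⟩ := h
      have h1 : (G.induce s).IsClique ({v} : Finset ↥s) := by simp
      have h2 := SimpleGraph.IsClique.card_le_cliqueNum (tc := h1)
      simp at h2
      omega
    exact Colorable.of_isEmpty _
  | succ n ih =>
    intro s hs
    haveI : Fintype ↥s := Fintype.ofFinite _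
    rcases hG s with hstab | ⟨X1, X2, _hdisj, hunion, hlt, hperf⟩
    · refine (stable_colorable' hstab).mono ?_
      have h2 : 2 ≤ (n + 1) * (n + 1 + 1) := by nlinarith
      omega
    · haveI : Fintype ↥X1 := Fintype.ofFinite _
      haveI : Fintype ↥X2 := Fintype.ofFinite _
      haveI : Fintype ↥(Subtype.val '' X1 : Set V) := Fintype.ofFinite _
      have e1 := induceInduceIso' G s X1
      have hclique1 : (G.induce (Subtype.val '' X1)).cliqueNum ≤ n := by
        have hle := cliqueNum_le_of_embedding' e1.symm.toEmbedding
        omega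
      have c1 : ((G.induce s).induce X1).Colorable (n * (n + 1) / 2) :=
        (ih _ hclique1).of_hom e1.toHom
      have hperf' : IsPerfect ((G.induce s).induce X2) := hperf
      have hchi2 := isPerfect_chromaticNumber_eq' hperf'
      have homega2 : ((G.induce s).induce X2).cliqueNum ≤ n + 1 :=
        le_trans (cliqueNum_le_of_embedding' (induceEmb' (G.induce s) X2)) hs
      have c2 : ((G.induce s).induce X2).Colorable (n + 1) := by
        rw [← chromaticNumber_le_iff_colorable, hchi2]
        exact_mod_cast homega2
      have hcol := colorable_union' (G.induce s) hunion c1 c2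
      have harith : n * (n + 1) / 2 + (n + 1) = (n + 1) * (n + 1 + 1) / 2 := by
        have h2 : 2 ∣ n * (n + 1) := (Nat.even_mul_succ_self n).two_dvd
        have hb : (n + 1) * (n + 1 + 1) = n * (n + 1) + 2 * (n + 1) := by ring
        generalize n * (n + 1) = a at h2 hb ⊢
        generalize (n + 1) * (n + 1 + 1) = c at hb ⊢
        omega
      rw [harith] at hcol
      exact hcol

theorem stmt_11 {V : Type u} [Fintype V] (G : SimpleGraph V)
    (hG : PerfectlyDiv 2 G) :
    G.chromaticNumber ≤ ((G.cliqueNum * (G.cliqueNum + 1)) / 2 : ℕ) := by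
  haveI : Fintype ↥(Set.univ : Set V) := Fintype.ofFinite _
  have e := G.induceUnivIso
  have h1 : (G.induce Set.univ).cliqueNum ≤ G.cliqueNum :=
    cliqueNum_le_of_embedding' e.toEmbedding
  have hc := main_key' G hG G.cliqueNum Set.univ h1
  have hcol : G.Colorable (G.cliqueNum * (G.cliqueNum + 1) / 2) :=
    hc.of_hom e.symm.toHom
  exact hcol.chromaticNumber_le
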